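/- For an odd prime p, natural numbers M ≥ 1 and 1 ≤ N ≤ p-1, and any j with 1 ≤ j ≤ p-1: the sum Σ_{k=0}^{MN} p(Mp, N, kp+j) equals (1/p)·[C(Mp+N, N) − 1]. -/
import Mathlib

open Finset

/-- The number of partitions of n into at most N parts, each of size at most M. -/
def restrictedPartitions (M N n : ℕ) : ℕ :=
  ((Finset.univ : Finset (Fin N → Fin (M + 1))).filter
    (fun f => (∀ i j : Fin N, i ≤ j → (f j : ℕ) ≤ (f i : ℕ)) ∧
      ∑ i, (f i : ℕ) = n)).card


def Ant (M N : ℕ) : Finset (Fin N → Fin (M + 1)) :=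
  Finset.univ.filter fun f => ∀ i j : Fin N, i ≤ j → (f j : ℕ) ≤ (f i : ℕ)

lemma mem_Ant {M N : ℕ} {f : Fin N → Fin (M + 1)} :
    f ∈ Ant M N ↔ ∀ i j : Fin N, i ≤ j → (f j : ℕ) ≤ (f i : ℕ) := by
  simp [Ant]

noncomputable def F (M N : ℕ) (z : ℂ) : ℂ := ∑ f ∈ Ant M N, z ^ (∑ i, (f i : ℕ))

lemma F_N_zero (M : ℕ) (z : ℂ) : F M 0 z = 1 := by
  rw [F]
  rw [show Ant M 0 = Finset.univ by ext f; simp [mem_Ant]; exact funext fun i => i.elim0]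
  simp

lemma F_M_zero (N : ℕ) (z : ℂ) : F 0 N z = 1 := by
  rw [F]
  have h1 : Ant 0 N = Finset.univ := by
    ext f
    simp only [mem_Ant, Finset.mem_univ, iff_true]
    intro i j _
    omega
  rw [h1]
  have h2 : ∀ f : Fin N → Fin 1, (∑ i, ((f i : ℕ))) = 0 := by
    intro f
    apply Finset.sum_eq_zero
    intro i _
    omega
  rw [Finset.sum_congr rfl (fun f _ => by rw [h2 f, pow_zero])]
  rw [Finset.sum_const, Finset.card_univ]
  simp

lemma R1 (M N : ℕ) (z : ℂ) :
    F (M+1) (N+1) z = F M (N+1) z + z^(M+1) * F (M+1) N z := by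
  rw [show F (M+1) (N+1) z = ∑ f ∈ Ant (M+1) (N+1), z ^ (∑ i, (f i : ℕ)) from rfl]
  rw [← Finset.sum_filter_add_sum_filter_not (Ant (M+1) (N+1))
    (fun f => (f 0 : ℕ) ≤ M)]
  congr 1
  · -- small part
    have himg : (Ant (M+1) (N+1)).filter (fun f => (f 0 : ℕ) ≤ M)
        = (Ant M (N+1)).image (fun (g : Fin (N+1) → Fin (M+1)) k => (g k).castSucc) := by
      ext f
      simp only [Finset.mem_filter, Finset.mem_image, mem_Ant]
      constructor
      · rintro ⟨hant, hle⟩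
        refine ⟨fun k => ⟨(f k : ℕ), ?_⟩, fun i j hij => ?_, ?_⟩
        · have := hant 0 k (Fin.zero_le k); omega
        · exact hant i j hij
        · funext k; exact Fin.ext rfl
      · rintro ⟨g, hg, rfl⟩
        refine ⟨fun i j hij => ?_, ?_⟩
        · simpa using hg i j hij
        · simp; omega
    rw [himg, Finset.sum_image (fun g hg g' hg' hgg' => ?_)]
    · rfl
    · funext k
      exact Fin.castSucc_injective _ (congrFun hgg' k)
  · -- big part
    have himg : (Ant (M+1) (N+1)).filter (fun f => ¬ (f 0 : ℕ) ≤ M)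
        = (Ant (M+1) N).image (fun (g : Fin N → Fin (M+2)) => Fin.cons (Fin.last (M+1)) g) := by
      ext f
      simp only [Finset.mem_filter, Finset.mem_image, mem_Ant]
      constructor
      · rintro ⟨hant, hle⟩
        refine ⟨fun k => f k.succ, fun i j hij => hant i.succ j.succ (by simpa using hij), ?_⟩
        have h0 : f 0 = Fin.last (M+1) := by
          apply Fin.ext
          have := (f 0).isLt
          simp only [Fin.val_last]
          omega
        rw [← h0]
        exact Fin.cons_self_tail f
      · rintro ⟨g, hg, rfl⟩
        constructor
        · intro i j hij
          induction j using Fin.cases with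
          | zero =>
            have : i = 0 := le_antisymm hij (Fin.zero_le i)
            rw [this]
          | succ j' =>
            induction i using Fin.cases with
            | zero =>
              simp only [Fin.cons_zero, Fin.cons_succ, Fin.val_last]
              have := (g j').isLt; omega
            | succ i' =>
              simp only [Fin.cons_succ]
              exact hg i' j' (by rwa [Fin.succ_le_succ_iff] at hij)
        · simp
    rw [himg, Finset.sum_image (fun g hg g' hg' hgg' => ?_)]
    · rw [show F (M+1) N z = ∑ f ∈ Ant (M+1) N, z ^ (∑ i, (f i : ℕ)) from rfl,
        Finset.mul_sum]
      apply Finset.sum_congr rfl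
      intro g hg
      rw [← pow_add]
      congr 1
      rw [Fin.sum_univ_succ]
      simp [add_comm]
    · have := congrFun hgg'
      funext k
      simpa using this k.succ

lemma R2 (M N : ℕ) (z : ℂ) :
    F (M+1) (N+1) z = F (M+1) N z + z^(N+1) * F M (N+1) z := by
  rw [show F (M+1) (N+1) z = ∑ f ∈ Ant (M+1) (N+1), z ^ (∑ i, (f i : ℕ)) from rfl]
  rw [← Finset.sum_filter_add_sum_filter_not (Ant (M+1) (N+1))
    (fun f => (f (Fin.last N) : ℕ) = 0)]
  congr 1
  · -- last part zero : drop it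
    have himg : (Ant (M+1) (N+1)).filter (fun f => (f (Fin.last N) : ℕ) = 0)
        = (Ant (M+1) N).image (fun (g : Fin N → Fin (M+2)) => Fin.snoc g 0) := by
      ext f
      simp only [Finset.mem_filter, Finset.mem_image, mem_Ant]
      constructor
      · rintro ⟨hant, hlast⟩
        refine ⟨fun k => f k.castSucc, fun i j hij => hant i.castSucc j.castSucc (by simpa using hij), ?_⟩
        have h0 : f (Fin.last N) = 0 := Fin.ext hlast
        rw [← h0]
        exact Fin.snoc_init_self f
      · rintro ⟨g, hg, rfl⟩
        constructor
        · intro i j hij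
          induction j using Fin.lastCases with
          | last =>
            simp only [Fin.snoc_last, Fin.val_zero]
            exact Nat.zero_le _
          | cast j' =>
            induction i using Fin.lastCases with
            | last =>
              have h : j'.castSucc = Fin.last N := le_antisymm (Fin.le_last _) hij
              exact absurd h (Fin.castSucc_lt_last j').ne
            | cast i' =>
              simp only [Fin.snoc_castSucc]
              exact hg i' j' (by rwa [Fin.castSucc_le_castSucc_iff] at hij)
        · simp
    rw [himg, Finset.sum_image (fun g hg g' hg' hgg' => ?_)]
    · rw [show F (M+1) N z = ∑ f ∈ Ant (M+1) N, z ^ (∑ i, (f i : ℕ)) from rfl]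
      apply Finset.sum_congr rfl
      intro g hg
      congr 1
      rw [Fin.sum_univ_castSucc]
      simp
    · funext k
      have := congrFun hgg' k.castSucc
      simpa using this
  · -- all parts positive : subtract one from each
    have himg : (Ant (M+1) (N+1)).filter (fun f => ¬ (f (Fin.last N) : ℕ) = 0)
        = (Ant M (N+1)).image (fun (g : Fin (N+1) → Fin (M+1)) k => (g k).succ) := by
      ext f
      simp only [Finset.mem_filter, Finset.mem_image, mem_Ant]
      constructor
      · rintro ⟨hant, hlast⟩
        have hpos : ∀ k : Fin (N+1), 1 ≤ (f k : ℕ) := by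
          intro k
          have := hant k (Fin.last N) (Fin.le_last k)
          omega
        refine ⟨fun k => ⟨(f k : ℕ) - 1, ?_⟩, fun i j hij => ?_, ?_⟩
        · have := (f k).isLt; have := hpos k; omega
        · have := hant i j hij; have := hpos i; have := hpos j
          simp only
          omega
        · funext k
          apply Fin.ext
          have := hpos k
          simp [Fin.val_succ]
          omega
      · rintro ⟨g, hg, rfl⟩
        refine ⟨fun i j hij => ?_, ?_⟩
        · simp only [Fin.val_succ]
          have := hg i j hij
          omega
        · simp
    rw [himg, Finset.sum_image (fun g hg g' hg' hgg' => ?_)]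
    · rw [show F M (N+1) z = ∑ f ∈ Ant M (N+1), z ^ (∑ i, (f i : ℕ)) from rfl,
        Finset.mul_sum]
      apply Finset.sum_congr rfl
      intro g hg
      rw [← pow_add]
      congr 1
      simp only [Fin.val_succ]
      rw [Finset.sum_add_distrib]
      simp [add_comm, Finset.card_univ]
    · funext k
      exact Fin.succ_injective _ (congrFun hgg' k)

lemma transposeF (M N : ℕ) (z : ℂ) :
    (1 - z^(N+1)) * F M (N+1) z = (1 - z^(M+1)) * F (M+1) N z := by
  have h1 := R1 M N z
  have h2 := R2 M N z
  linear_combination h2 - h1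

lemma F_one (M N : ℕ) : F M N 1 = ((M + N).choose N : ℂ) := by
  induction N generalizing M with
  | zero => simp [F_N_zero]
  | succ N ihN =>
    induction M with
    | zero => simp [F_M_zero]
    | succ M ihM =>
      rw [R1, ihM, ihN (M+1), one_pow, one_mul]
      have : (M + 1 + (N + 1)).choose (N + 1)
          = (M + (N+1)).choose (N+1) + (M + 1 + N).choose N := by
        have h := Nat.choose_succ_succ (M + N + 1) N
        rw [show M + 1 + (N + 1) = M + N + 1 + 1 by ring, h,
          show M + (N + 1) = M + N + 1 by ring, show M + 1 + N = M + N + 1 by ring,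
          Nat.add_comm]
      rw [this]
      push_cast
      ring

lemma F_wall {p : ℕ} {z : ℂ} (hz : IsPrimitiveRoot z p) (hp : 0 < p)
    (A c : ℕ) (hA : 1 ≤ A) (hc1 : 1 ≤ c) (hc : ¬ p ∣ c) :
    F (A * p - 1) c z = 0 := by
  obtain ⟨c', rfl⟩ : ∃ c', c = c' + 1 := ⟨c - 1, by omega⟩
  have key := transposeF (A * p - 1) c' z
  have hAp : A * p - 1 + 1 = A * p := by
    have : 1 ≤ A * p := Nat.one_le_iff_ne_zero.mpr (by positivity)
    omega
  rw [hAp] at key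
  have hz1 : z ^ (A * p) = 1 := by
    rw [show A * p = p * A by ring, pow_mul, hz.pow_eq_one, one_pow]
  rw [hz1, sub_self, zero_mul] at key
  have hne : (1 : ℂ) - z ^ (c' + 1) ≠ 0 := by
    intro h
    apply hc
    exact (hz.pow_eq_one_iff_dvd (c' + 1)).mp (by linear_combination -h)
  exact (mul_eq_zero.mp key).resolve_left hne

lemma F_mul {p : ℕ} {z : ℂ} (hz : IsPrimitiveRoot z p) (hp : 0 < p)
    (M N : ℕ) (hN : N ≤ p - 1) : F (M * p) N z = 1 := by
  induction N with
  | zero => exact F_N_zero _ _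
  | succ N ihN =>
    rcases Nat.eq_zero_or_pos M with rfl | hM
    · simpa using F_M_zero (N + 1) z
    have hMp : 1 ≤ M * p := Nat.one_le_iff_ne_zero.mpr (by positivity)
    have hstep : F (M * p - 1 + 1) (N + 1) z
        = F (M * p - 1) (N + 1) z + z ^ (M * p - 1 + 1) * F (M * p - 1 + 1) N z :=
      R1 (M * p - 1) N z
    rw [show M * p - 1 + 1 = M * p by omega] at hstep
    have hz1 : z ^ (M * p) = 1 := by
      rw [show M * p = p * M by ring, pow_mul, hz.pow_eq_one, one_pow]
    rw [hstep, hz1, F_wall hz hp M (N+1) hM (by omega)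
        (fun hdvd => absurd (Nat.le_of_dvd (by omega) hdvd) (by omega)), one_mul,
      ihN (by omega), zero_add]

lemma restricted_eq_card (M N n : ℕ) :
    restrictedPartitions M N n = ((Ant M N).filter (fun f => ∑ i, (f i : ℕ) = n)).card := by
  rw [restrictedPartitions, Ant, Finset.filter_filter]

lemma F_eq_sum (M N B : ℕ) (hB : M * N < B) (z : ℂ) :
    F M N z = ∑ n ∈ Finset.range B, (restrictedPartitions M N n : ℂ) * z ^ n := by
  have hmaps : ∀ f ∈ Ant M N, (∑ i, (f i : ℕ)) ∈ Finset.range B := by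
    intro f _
    rw [Finset.mem_range]
    calc ∑ i, (f i : ℕ) ≤ ∑ _i : Fin N, M := Finset.sum_le_sum (fun i _ => by omega)
    _ = N * M := by simp [Finset.sum_const, Finset.card_univ, mul_comm]
    _ < B := by rw [mul_comm] at hB; omega
  rw [show F M N z = ∑ f ∈ Ant M N, z ^ (∑ i, (f i : ℕ)) from rfl]
  rw [← Finset.sum_fiberwise_of_maps_to hmaps (fun f => z ^ (∑ i, (f i : ℕ)))]
  apply Finset.sum_congr rfl
  intro n _
  rw [restricted_eq_card]
  rw [Finset.sum_congr rfl (fun f hf => by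
    rw [(Finset.mem_filter.mp hf).2])]
  rw [Finset.sum_const, nsmul_eq_mul]

lemma root_sum {p : ℕ} {z : ℂ} (hz : IsPrimitiveRoot z p) (hp : 0 < p) (k : ℕ) :
    ∑ t ∈ Finset.range p, z ^ (t * k) = if p ∣ k then (p : ℂ) else 0 := by
  have hrw : ∀ t, z ^ (t * k) = (z ^ k) ^ t := fun t => by
    rw [← pow_mul, mul_comm]
  rw [Finset.sum_congr rfl (fun t _ => hrw t)]
  by_cases hdvd : p ∣ k
  · rw [if_pos hdvd]
    have h1 : z ^ k = 1 := (hz.pow_eq_one_iff_dvd k).mpr hdvd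
    simp [h1]
  · rw [if_neg hdvd]
    have h1 : z ^ k ≠ 1 := fun h => hdvd ((hz.pow_eq_one_iff_dvd k).mp h)
    rw [geom_sum_eq h1]
    rw [← pow_mul, mul_comm k p, pow_mul, hz.pow_eq_one, one_pow, sub_self, zero_div]

/-- For an odd prime p, M ≥ 1, 1 ≤ N ≤ p-1, 1 ≤ j ≤ p-1:
∑_{k=0}^{MN} p(Mp, N, kp+j) = (C(Mp+N, N) − 1)/p. -/
theorem sum_restrictedPartitions_nonzero_residue (p M N j : ℕ)
    (hp : p.Prime) (hodd : Odd p) (hM : 1 ≤ M) (hN1 : 1 ≤ N) (hN : N ≤ p - 1)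
    (hj1 : 1 ≤ j) (hj : j ≤ p - 1) :
    p * ∑ k ∈ Finset.range (M * N + 1), restrictedPartitions (M * p) N (k * p + j)
      = (M * p + N).choose N - 1 := by
  have hp2 : 2 ≤ p := hp.two_le
  obtain ⟨z, hz⟩ : ∃ z : ℂ, IsPrimitiveRoot z p :=
    ⟨_, Complex.isPrimitiveRoot_exp p (by omega)⟩
  have hp0 : 0 < p := by omega
  set B := M * N * p + p with hB
  set C := (M * p + N).choose N with hC
  set T := ∑ k ∈ Finset.range (M * N + 1), restrictedPartitions (M * p) N (k * p + j) with hT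
  have hBgt : M * p * N < B := by
    have : M * p * N = M * N * p := by ring
    omega
  -- the double sum
  set E : ℂ := ∑ n ∈ Finset.range B, (restrictedPartitions (M * p) N n : ℂ)
      * ∑ t ∈ Finset.range p, z ^ (t * (n + (p - j))) with hE
  -- Claim 2 : E = C - 1
  have claim2 : E = (C : ℂ) - 1 := by
    have hswap : E = ∑ t ∈ Finset.range p,
        z ^ (t * (p - j)) * F (M * p) N (z ^ t) := by
      rw [hE]
      rw [Finset.sum_congr rfl (fun n _ => Finset.mul_sum _ _ _)]
      rw [Finset.sum_comm]
      apply Finset.sum_congr rfl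
      intro t _
      rw [F_eq_sum (M * p) N B hBgt (z ^ t), Finset.mul_sum]
      apply Finset.sum_congr rfl
      intro n _
      rw [← pow_mul]
      rw [show t * (n + (p - j)) = t * (p - j) + t * n by ring]
      rw [pow_add]
      ring
    have hpj1 : 1 ≤ p - j := by omega
    have hpjp : ¬ p ∣ (p - j) := fun hdvd =>
      absurd (Nat.le_of_dvd (by omega) hdvd) (by omega)
    have hgeom : ∑ t ∈ Finset.range p, z ^ (t * (p - j)) = 0 := by
      rw [root_sum hz hp0, if_neg hpjp]
    obtain ⟨p', rfl⟩ : ∃ p', p = p' + 1 := ⟨p - 1, by omega⟩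
    rw [hswap, Finset.sum_range_succ']
    rw [Finset.sum_range_succ'] at hgeom
    have h0term : z ^ (0 * (p' + 1 - j)) * F (M * (p' + 1)) N (z ^ 0) = (C : ℂ) := by
      rw [zero_mul, pow_zero, one_mul, F_one, hC]
    have hterm : ∀ i ∈ Finset.range p', z ^ ((i + 1) * (p' + 1 - j)) * F (M * (p' + 1)) N (z ^ (i + 1))
        = z ^ ((i + 1) * (p' + 1 - j)) := by
      intro i hi
      rw [Finset.mem_range] at hi
      have hcop : (i + 1).Coprime (p' + 1) :=
        Nat.Coprime.symm ((Nat.Prime.coprime_iff_not_dvd hp).mpr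
          (fun hdvd => absurd (Nat.le_of_dvd (by omega) hdvd) (by omega)))
      have hzt : IsPrimitiveRoot (z ^ (i + 1)) (p' + 1) := hz.pow_of_coprime _ hcop
      rw [F_mul hzt hp0 M N hN, mul_one]
    rw [Finset.sum_congr rfl hterm, h0term]
    have hsum : ∑ i ∈ Finset.range p', z ^ ((i + 1) * (p' + 1 - j)) = -1 := by
      rw [zero_mul, pow_zero] at hgeom
      linear_combination hgeom
    rw [hsum]
    ring
  -- Claim 1 : E = p * T
  have claim1 : E = (p : ℂ) * (T : ℕ) := by
    rw [hE]
    rw [Finset.sum_congr rfl (fun n _ => by rw [root_sum hz hp0 (n + (p - j))])]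
    rw [Finset.sum_congr rfl (fun n _ => (mul_ite _ _ _ _))]
    rw [Finset.sum_congr rfl (fun n (_ : n ∈ Finset.range B) => by rw [mul_zero])]
    rw [← Finset.sum_filter]
    have himg : (Finset.range B).filter (fun n => p ∣ n + (p - j))
        = (Finset.range (M * N + 1)).image (fun k => k * p + j) := by
      ext n
      simp only [Finset.mem_filter, Finset.mem_image, Finset.mem_range]
      constructor
      · rintro ⟨hnB, q, hq⟩
        have hq1 : 1 ≤ q := by
          rcases Nat.eq_zero_or_pos q with rfl | h
          · omega
          · exact h
        obtain ⟨k, rfl⟩ : ∃ k, q = k + 1 := ⟨q - 1, by omega⟩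
        have hu : p * (k + 1) = p * k + p := by ring
        have hn : n = p * k + j := by omega
        have hkle : p * k < p * (M * N + 1) := by
          have : p * (M * N + 1) = M * N * p + p := by ring
          omega
        have hk : k < M * N + 1 := Nat.lt_of_mul_lt_mul_left hkle
        exact ⟨k, hk, by rw [mul_comm]; omega⟩
      · rintro ⟨k, hk, rfl⟩
        have hkp : k * p ≤ M * N * p := Nat.mul_le_mul_right p (by omega)
        refine ⟨by omega, k + 1, ?_⟩
        have : p * (k + 1) = k * p + p := by ring
        omega
    rw [himg, Finset.sum_image (fun a _ b _ hab =>
      Nat.eq_of_mul_eq_mul_right hp0 (by omega))]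
    rw [hT]
    push_cast
    rw [Finset.mul_sum]
    apply Finset.sum_congr rfl
    intro k _
    ring
  have hC1 : 1 ≤ C := Nat.choose_pos (Nat.le_add_left N (M * p))
  have final : ((p * T : ℕ) : ℂ) = ((C - 1 : ℕ) : ℂ) := by
    push_cast [Nat.cast_sub hC1]
    rw [← claim1, claim2]
  exact_mod_cast final
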